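/- arXiv:1610.00947 — 2 statements merged into one kernel-verified Lean document; each statement's English description precedes it below -/
import Mathlib

section
/- Let 0 → K →^φ G →^π H → 0 be a short exact sequence of abelian groups (φ injective, π surjective, and the image of φ equals the kernel of π), and let A be a G-graded ring with grading components (A_g)_{g∈G}. Suppose that the induced H-grading of A, given by B_h := ⊕_{g ∈ π^{-1}(h)} A_g, is strong, and that the induced K-grading of the subring A^K := ⊕_{k∈K} A_{φ(k)}, given by the components A_{φ(k)}, is strong. Then the G-grading of A is strong, i.e. A_g · A_{g'} = A_{g+g'} for all g, g' ∈ G. -/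
open Pointwise

/-- A `G`-grading of a ring `A` by additive subgroups: `A` is the internal direct
sum of the components, `1` lies in the degree-zero component, and the additive
subgroup generated by products of elements of degrees `g` and `h` is contained in
the component of degree `g + h`. -/
structure IsRingGrading {G A : Type*} [AddCommGroup G] [DecidableEq G] [Ring A]
    (𝒜 : G → AddSubgroup A) : Prop where
  isInternal : DirectSum.IsInternal 𝒜
  one_mem : (1 : A) ∈ 𝒜 0
  mul_le : ∀ g h : G,
    AddSubgroup.closure ((𝒜 g : Set A) * (𝒜 h : Set A)) ≤ 𝒜 (g + h)

/-- The ℤ-span of (the coercion of) an additive subgroup is the corresponding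
ℤ-submodule. -/
lemma span_coe_addSubgroup {A : Type*} [Ring A] (s : AddSubgroup A) :
    Submodule.span ℤ (s : Set A) = AddSubgroup.toIntSubmodule s := by
  apply AddSubgroup.toIntSubmodule.symm.injective
  simpa using Submodule.span_int_eq s

/-- Multiplication of the associated ℤ-submodules corresponds to the additive
subgroup closure of the pointwise product. -/
lemma toIntSubmodule_mul {A : Type*} [Ring A] (s t : AddSubgroup A) :
    AddSubgroup.toIntSubmodule s * AddSubgroup.toIntSubmodule t =
      AddSubgroup.toIntSubmodule (AddSubgroup.closure ((s : Set A) * (t : Set A))) := by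
  rw [← span_coe_addSubgroup, ← span_coe_addSubgroup, Submodule.span_mul_span]
  apply AddSubgroup.toIntSubmodule.symm.injective
  simpa using Submodule.span_int_eq_addSubgroupClosure ((s : Set A) * (t : Set A))

lemma toIntSubmodule_closure {A : Type*} [Ring A] (S : Set A) :
    AddSubgroup.toIntSubmodule (AddSubgroup.closure S) = Submodule.span ℤ S := by
  apply AddSubgroup.toIntSubmodule.symm.injective
  simpa using (Submodule.span_int_eq_addSubgroupClosure S).symm

/-- Strong gradings are preserved under extensions of abelian groups: given a
short exact sequence `0 → K → G → H → 0` and a `G`-graded ring `A`, if the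
induced `H`-grading of `A` is strong and the induced `K`-grading of the subring
`A^K = ⊕_{k ∈ K} A_{φ k}` is strong, then the `G`-grading of `A` is strong. -/
theorem strong_grading_of_extension {K G H A : Type*}
    [AddCommGroup K] [AddCommGroup G] [DecidableEq G] [AddCommGroup H] [Ring A]
    (φ : K →+ G) (π : G →+ H)
    (hφ : Function.Injective φ) (hπ : Function.Surjective π)
    (hexact : φ.range = π.ker)
    (𝒜 : G → AddSubgroup A) (h𝒜 : IsRingGrading 𝒜)
    (ℬ : H → AddSubgroup A)
    (hℬ : ∀ h : H,
      ℬ h = AddSubgroup.closure (⋃ g ∈ {g : G | π g = h}, (𝒜 g : Set A)))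
    (hstrongH : ∀ h h' : H,
      AddSubgroup.closure ((ℬ h : Set A) * (ℬ h' : Set A)) = ℬ (h + h'))
    (hstrongK : ∀ k k' : K,
      AddSubgroup.closure ((𝒜 (φ k) : Set A) * (𝒜 (φ k') : Set A))
        = 𝒜 (φ (k + k'))) :
    ∀ g g' : G,
      AddSubgroup.closure ((𝒜 g : Set A) * (𝒜 g' : Set A)) = 𝒜 (g + g') := by
  -- Pass to ℤ-submodules.
  set M : G → Submodule ℤ A := fun g => AddSubgroup.toIntSubmodule (𝒜 g) with hMdef
  have hMle : ∀ g g' : G, M g * M g' ≤ M (g + g') := by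
    intro g g'
    rw [hMdef, toIntSubmodule_mul]
    exact AddSubgroup.toIntSubmodule.monotone (h𝒜.mul_le g g')
  have hMK : ∀ k k' : K, M (φ k) * M (φ k') = M (φ (k + k')) := by
    intro k k'
    rw [hMdef, toIntSubmodule_mul]
    exact congrArg _ (hstrongK k k')
  -- The H-graded pieces as ℤ-submodules.
  set N : H → Submodule ℤ A := fun h => ⨆ g ∈ {g : G | π g = h}, M g with hNdef
  have hN : ∀ h : H, AddSubgroup.toIntSubmodule (ℬ h) = N h := by
    intro h
    rw [hℬ h, toIntSubmodule_closure, Submodule.span_iUnion₂]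
    exact iSup_congr fun g => iSup_congr fun _ => span_coe_addSubgroup _
  have hNmul : ∀ h h' : H, N h * N h' = N (h + h') := by
    intro h h'
    rw [← hN, ← hN, ← hN, toIntSubmodule_mul]
    exact congrArg _ (hstrongH h h')
  have hone : (1 : A) ∈ M 0 := h𝒜.one_mem
  have hind : iSupIndep M := h𝒜.isInternal.addSubgroup_iSupIndep.map_orderIso
    AddSubgroup.toIntSubmodule
  -- Key step: 1 ∈ M g * M (-g) for every g.
  have one_mem : ∀ g : G, (1 : A) ∈ M g * M (-g) := by
    intro g
    have h1 : (1 : A) ∈ N (π g) * N (-(π g)) := by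
      rw [hNmul, add_neg_cancel]
      exact le_iSup₂ (f := fun g _ => M g) (0 : G) (by simp) hone
    set S := M g * M (-g) with hS
    set T := ⨆ c ∈ {c : G | c ≠ 0}, M c with hT
    have hle : N (π g) * N (-(π g)) ≤ S ⊔ T := by
      rw [hNdef]
      simp only [Submodule.iSup_mul, Submodule.mul_iSup]
      refine iSup₂_le fun g₁ hg₁ => iSup₂_le fun g₂ hg₂ => ?_
      simp only [Set.mem_setOf_eq] at hg₁ hg₂
      by_cases hc : g₂ + g₁ = 0
      · -- here g₁ = -g₂ and g₂ - g ∈ ker π = range φ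
        have hg1 : g₁ = -g₂ := neg_eq_of_add_eq_zero_right hc |>.symm
        have hker : g₂ - g ∈ π.ker := by
          rw [AddMonoidHom.mem_ker, map_sub, hg₂, sub_self]
        rw [← hexact] at hker
        obtain ⟨k, hk⟩ := hker
        have h1le : (1 : Submodule ℤ A) ≤ M (φ (-k)) * M (φ k) := by
          rw [hMK, Submodule.one_le, neg_add_cancel, map_zero]
          exact hone
        refine le_sup_of_le_left ?_
        have e1 : g₂ + φ (-k) = g := by rw [map_neg, hk]; abel
        have e2 : φ k + g₁ = -g := by rw [hk, hg1]; abel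
        calc M g₂ * M g₁ = M g₂ * 1 * M g₁ := by rw [mul_one]
          _ ≤ M g₂ * (M (φ (-k)) * M (φ k)) * M g₁ :=
            mul_le_mul' (mul_le_mul' le_rfl h1le) le_rfl
          _ = (M g₂ * M (φ (-k))) * (M (φ k) * M g₁) := by
            rw [mul_assoc, mul_assoc, mul_assoc]
          _ ≤ M (g₂ + φ (-k)) * M (φ k + g₁) :=
            mul_le_mul' (hMle _ _) (hMle _ _)
          _ = S := by rw [e1, e2]
      · refine le_sup_of_le_right ?_
        refine le_trans (hMle g₂ g₁) ?_
        exact le_iSup₂ (f := fun c _ => M c) (g₂ + g₁) hc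
    obtain ⟨s, hs, t, ht, hst⟩ := Submodule.mem_sup.mp (hle h1)
    have hsM0 : s ∈ M 0 := by
      have := hMle g (-g) hs
      rwa [add_neg_cancel] at this
    have htM0 : t ∈ M 0 := by
      have : t = 1 - s := by rw [← hst]; abel
      rw [this]
      exact sub_mem hone hsM0
    have hdisj : Disjoint (M 0) T := hind.disjoint_biSup (by simp)
    have ht0 : t = 0 := by
      exact (Submodule.mem_bot ℤ).mp (hdisj.le_bot (Submodule.mem_inf.mpr ⟨htM0, ht⟩))
    rw [← hst, ht0, add_zero]
    exact hs
  -- Conclude strongness.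
  intro g g'
  apply AddSubgroup.toIntSubmodule.injective
  rw [← toIntSubmodule_mul]
  show M g * M g' = M (g + g')
  refine le_antisymm (hMle g g') ?_
  have h1le : (1 : Submodule ℤ A) ≤ M (-g') * M g' := by
    rw [Submodule.one_le]
    simpa using one_mem (-g')
  calc M (g + g') = M (g + g') * 1 := by rw [mul_one]
    _ ≤ M (g + g') * (M (-g') * M g') := mul_le_mul' le_rfl h1le
    _ = (M (g + g') * M (-g')) * M g' := by rw [mul_assoc]
    _ ≤ M (g + g' + -g') * M g' := mul_le_mul' (hMle _ _) le_rfl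
    _ = M g * M g' := by rw [add_neg_cancel_right]
end

section
/- Let G be an abelian group, let S ⊆ G be a generating set of G, and let A be a G-graded ring with grading components (A_g)_{g∈G}. If for every s ∈ S one has A_s · A_{-s} = A_0 and A_{-s} · A_s = A_0, then the grading is strong, i.e. A_g · A_h = A_{g+h} for all g, h ∈ G. -/
open Pointwise

/-- Bridge: the additive subgroup generated by a product of two additive subgroups
of a ring is the underlying additive subgroup of the product of the corresponding
`ℤ`-submodules. -/
lemma closure_mul_eq_toIntSubmodule_mul {A : Type*} [Ring A] (P Q : AddSubgroup A) :
    AddSubgroup.closure ((P : Set A) * (Q : Set A)) =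
      (AddSubgroup.toIntSubmodule P * AddSubgroup.toIntSubmodule Q).toAddSubgroup := by
  have h1 : Submodule.span ℤ (P : Set A) = AddSubgroup.toIntSubmodule P :=
    Submodule.span_eq (AddSubgroup.toIntSubmodule P)
  have h2 : Submodule.span ℤ (Q : Set A) = AddSubgroup.toIntSubmodule Q :=
    Submodule.span_eq (AddSubgroup.toIntSubmodule Q)
  rw [← Submodule.span_int_eq_addSubgroupClosure, ← Submodule.span_mul_span, h1, h2]

/-- To check that a grading is strong, it suffices to check the strongness
condition on a generating set of the grading group. -/
theorem strong_grading_of_generators {G A : Type*}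
    [AddCommGroup G] [DecidableEq G] [Ring A]
    (𝒜 : G → AddSubgroup A) (h𝒜 : IsRingGrading 𝒜)
    (S : Set G) (hS : AddSubgroup.closure S = ⊤)
    (hgen : ∀ s ∈ S,
      AddSubgroup.closure ((𝒜 s : Set A) * (𝒜 (-s) : Set A)) = 𝒜 0 ∧
      AddSubgroup.closure ((𝒜 (-s) : Set A) * (𝒜 s : Set A)) = 𝒜 0) :
    ∀ g h : G,
      AddSubgroup.closure ((𝒜 g : Set A) * (𝒜 h : Set A)) = 𝒜 (g + h) := by
  set M : G → Submodule ℤ A := fun g => AddSubgroup.toIntSubmodule (𝒜 g) with hM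
  have hMA : ∀ g : G, (M g).toAddSubgroup = 𝒜 g := fun g =>
    AddSubgroup.toIntSubmodule_toAddSubgroup (𝒜 g)
  have htoInt : ∀ {N₁ N₂ : Submodule ℤ A}, N₁.toAddSubgroup = N₂.toAddSubgroup → N₁ = N₂ := by
    intro N₁ N₂ h
    ext x
    exact SetLike.ext_iff.mp h x
  -- transfer the hypotheses to the submodule world
  have hmul : ∀ g h : G, M g * M h ≤ M (g + h) := by
    intro g h x hx
    exact h𝒜.mul_le g h ((closure_mul_eq_toIntSubmodule_mul (𝒜 g) (𝒜 h)).symm ▸ hx)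
  have hone : (1 : A) ∈ M 0 := h𝒜.one_mem
  have hgen' : ∀ s ∈ S, M s * M (-s) = M 0 ∧ M (-s) * M s = M 0 := by
    intro s hs
    obtain ⟨h1, h2⟩ := hgen s hs
    constructor <;> apply htoInt
    · exact (closure_mul_eq_toIntSubmodule_mul (𝒜 s) (𝒜 (-s))).symm.trans
        (h1.trans (hMA 0).symm)
    · exact (closure_mul_eq_toIntSubmodule_mul (𝒜 (-s)) (𝒜 s)).symm.trans
        (h2.trans (hMA 0).symm)
  -- multiplying by the degree-zero component does nothing
  have hzl : ∀ h : G, M 0 * M h = M h := by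
    intro h
    refine le_antisymm (le_trans (hmul 0 h) (le_of_eq (congrArg M (zero_add h)))) fun x hx => ?_
    simpa using Submodule.mul_mem_mul hone hx
  have hzr : ∀ h : G, M h * M 0 = M h := by
    intro h
    refine le_antisymm (le_trans (hmul h 0) (le_of_eq (congrArg M (add_zero h)))) fun x hx => ?_
    simpa using Submodule.mul_mem_mul hx hone
  -- the set of "strong" degrees is a subgroup
  let T : AddSubgroup G :=
    { carrier := {g | ∀ h : G, M g * M h = M (g + h) ∧ M h * M g = M (h + g)}
      zero_mem' := fun h => by simpa using ⟨hzl h, hzr h⟩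
      add_mem' := by
        rintro g₁ g₂ hg₁ hg₂ h
        constructor
        · refine le_antisymm (hmul _ _) ?_
          have e : M (g₁ + g₂ + h) = M g₁ * (M g₂ * M h) := by
            rw [(hg₂ h).1, add_assoc, (hg₁ (g₂ + h)).1]
          rw [e, ← mul_assoc]
          exact mul_le_mul' (hmul g₁ g₂) le_rfl
        · refine le_antisymm (hmul _ _) ?_
          have e : M (h + (g₁ + g₂)) = M h * M g₁ * M g₂ := by
            rw [(hg₁ h).2, ← add_assoc, (hg₂ (h + g₁)).2]
          rw [e, mul_assoc]
          exact mul_le_mul' le_rfl (hmul g₁ g₂)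
      neg_mem' := by
        rintro g hg h
        have h1 : M g * M (-g) = M 0 := by
          have := (hg (-g)).1
          rwa [add_neg_cancel] at this
        have h2 : M (-g) * M g = M 0 := by
          have := (hg (-g)).2
          rwa [neg_add_cancel] at this
        constructor
        · refine le_antisymm (hmul _ _) ?_
          have e : M (-g + h) = M (-g) * M h := by
            have e1 : g + (-g + h) = h := by abel
            have := (hg (-g + h)).1
            rw [e1] at this
            rw [← hzl (-g + h), ← h2, mul_assoc, this]
          rw [e]
        · refine le_antisymm (hmul _ _) ?_
          have e : M (h + -g) = M h * M (-g) := by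
            have e1 : h + -g + g = h := by abel
            have := (hg (h + -g)).2
            rw [e1] at this
            rw [← hzr (h + -g), ← h1, ← mul_assoc, this]
          rw [e] }
  -- generators lie in T
  have hST : S ⊆ (T : Set G) := by
    intro s hs
    obtain ⟨h1, h2⟩ := hgen' s hs
    intro h
    constructor
    · refine le_antisymm (hmul _ _) ?_
      have e : M (s + h) = M s * (M (-s) * M (s + h)) := by
        rw [← mul_assoc, h1, hzl]
      have e1 : -s + (s + h) = h := by abel
      have hle : M (-s) * M (s + h) ≤ M h :=
        le_trans (hmul (-s) (s + h)) (le_of_eq (congrArg M e1))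
      rw [e]
      exact mul_le_mul' le_rfl hle
    · refine le_antisymm (hmul _ _) ?_
      have e : M (h + s) = M (h + s) * M (-s) * M s := by
        rw [mul_assoc, h2, hzr]
      have e1 : h + s + -s = h := by abel
      have hle : M (h + s) * M (-s) ≤ M h :=
        le_trans (hmul (h + s) (-s)) (le_of_eq (congrArg M e1))
      rw [e]
      exact mul_le_mul' hle le_rfl
  -- hence T is everything
  have hT : ∀ g : G, g ∈ T := by
    have hle : AddSubgroup.closure S ≤ T := (AddSubgroup.closure_le T).mpr hST
    rw [hS, top_le_iff] at hle
    intro g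
    rw [hle]
    trivial
  intro g h
  rw [closure_mul_eq_toIntSubmodule_mul]
  have key : M g * M h = M (g + h) := ((hT g) h).1
  calc (AddSubgroup.toIntSubmodule (𝒜 g) * AddSubgroup.toIntSubmodule (𝒜 h)).toAddSubgroup
      = (M g * M h).toAddSubgroup := rfl
    _ = (M (g + h)).toAddSubgroup := by rw [key]
    _ = 𝒜 (g + h) := hMA (g + h)
end
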